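/- Let (X, Y) be a continuous biframe for H with respect to (Ω, μ). Then the continuous biframe operator S_{X,Y} is adjointable with adjoint S_{Y,X}; that is, ⟨S_{X,Y} f, g⟩ = ⟨f, S_{Y,X} g⟩ for all f, g ∈ H. -/

import Mathlib

set_option linter.unusedSectionVars false
section Aux
variable {𝒜 : Type*} [NormedRing 𝒜] [StarRing 𝒜] [CStarRing 𝒜] [NormedAlgebra ℂ 𝒜]
  [CompleteSpace 𝒜] [PartialOrder 𝒜] [StarOrderedRing 𝒜]

noncomputable def myStarL : 𝒜 →L[ℝ] 𝒜 :=
  (starAddEquiv (R := 𝒜)).toAddMonoidHom.toRealLinearMap continuous_star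

lemma my_star_real_smul (x : ℝ) (a : 𝒜) : star (x • a) = x • star a := by
  have h := (myStarL (𝒜 := 𝒜)).map_smul x a
  have h2 : ∀ b : 𝒜, myStarL b = star b := fun b => rfl
  rw [h2, h2] at h; exact h

lemma my_real_smul_nonneg {r : ℝ} (hr : 0 ≤ r) {a : 𝒜} (ha : 0 ≤ a) : 0 ≤ r • a := by
  have h := star_left_conjugate_nonneg ha ((Real.sqrt r) • (1 : 𝒜))
  rwa [my_star_real_smul, star_one, smul_mul_assoc, one_mul, mul_smul_comm, mul_one,
    smul_smul, Real.mul_self_sqrt hr] at h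

lemma my_real_smul_le {r : ℝ} (hr : 0 ≤ r) {a b : 𝒜} (hab : a ≤ b) : r • a ≤ r • b := by
  have := my_real_smul_nonneg hr (sub_nonneg.mpr hab)
  rwa [smul_sub, sub_nonneg] at this

lemma my_star_I_smul_one : star ((Complex.I : ℂ) • (1 : 𝒜)) = -((Complex.I : ℂ) • (1 : 𝒜)) := by
  set e : 𝒜 := (Complex.I : ℂ) • (1 : 𝒜) with he
  have hee : e * e = -1 := by
    rw [he, smul_mul_assoc, one_mul, smul_smul, Complex.I_mul_I, neg_smul, one_smul]
  set u : 𝒜 := star e with hu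
  have huu : u * u = -1 := by
    rw [hu, ← star_mul, hee, star_neg, star_one]
  have hcomm : ∀ a : 𝒜, e * a = a * e := by
    intro a
    rw [he, smul_mul_assoc, one_mul, mul_smul_comm, mul_one]
  have hcommu : ∀ a : 𝒜, u * a = a * u := by
    intro a
    have := congrArg star (hcomm (star a))
    rw [star_mul, star_mul, star_star, ← hu] at this
    exact this.symm
  set v : 𝒜 := Complex.I • u with hv
  have hvu : v = e * u := by rw [hv, he, smul_mul_assoc, one_mul]
  have hvsa : star v = v := by
    rw [hvu, star_mul, star_star, ← hu, hcomm]
  have hvv : v * v = 1 := by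
    rw [hv, smul_mul_assoc, mul_smul_comm, smul_smul, Complex.I_mul_I, huu, neg_smul, one_smul,
      neg_neg]
  -- (u + e)² = (v - 1) + (v - 1) ≥ 0
  have hh : (u + e) * (u + e) = (v - 1) + (v - 1) := by
    rw [add_mul, mul_add, mul_add, huu, hee, hcommu e, ← hvu]
    abel
  have hpos : (0 : 𝒜) ≤ (v - 1) + (v - 1) := by
    rw [← hh]
    have hst : star (u + e) = u + e := by rw [star_add, star_star, ← hu]; exact add_comm e u
    calc (0:𝒜) ≤ star (u + e) * (u + e) := star_mul_self_nonneg _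
      _ = (u + e) * (u + e) := by rw [hst]
  have hv1 : (1 : 𝒜) ≤ v := by
    have h2 : (v - 1) + (v - 1) = (2:ℝ) • (v - 1) := by
      rw [two_smul]
    rw [h2] at hpos
    have := my_real_smul_nonneg (by norm_num : (0:ℝ) ≤ (1/2:ℝ)) hpos
    rw [smul_smul] at this
    norm_num at this
    exact this
  -- w = v - 1 satisfies w ≥ 0, w² = -2w, hence w = 0
  set w : 𝒜 := v - 1 with hw
  have hwnn : 0 ≤ w := sub_nonneg.mpr hv1
  have hwsa : star w = w := by rw [hw, star_sub, hvsa, star_one]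
  have hww : w * w = -(w + w) := by
    rw [hw, sub_mul, mul_sub, mul_sub, hvv, mul_one, one_mul, one_mul]
    abel
  have hww_nonneg : 0 ≤ w * w := by
    calc (0:𝒜) ≤ star w * w := star_mul_self_nonneg w
      _ = w * w := by rw [hwsa]
  have hww_nonpos : w * w ≤ 0 := by
    rw [hww, neg_nonpos]
    exact add_nonneg hwnn hwnn
  have hww0 : w * w = 0 := le_antisymm hww_nonpos hww_nonneg
  have hw0 : w = 0 := by
    have h2 : w + w = 0 := by
      have h := hww; rw [hww0] at h
      have h2 : -(w + w) = 0 := h.symm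
      rwa [neg_eq_zero] at h2
    have : (2:ℝ) • w = 0 := by rw [two_smul]; exact h2
    have := congrArg (fun x => ((1:ℝ)/2) • x) this
    simpa [smul_smul] using this
  have hv1' : v = 1 := by rw [← sub_eq_zero]; exact hw0
  -- v = I • u = 1  ⇒  u = -I • 1
  have : u = -e := by
    have := congrArg (fun x => (-Complex.I : ℂ) • x) hv1'
    simp only [hv] at this
    rw [smul_smul] at this
    norm_num at this
    exact this
  exact this

lemma my_smul_decomp (z : ℂ) (b : 𝒜) : z • b = z.re • b + z.im • (Complex.I • b) := by
  rw [← Complex.coe_smul, ← Complex.coe_smul, smul_smul, ← add_smul, Complex.re_add_im]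

lemma my_star_smul (z : ℂ) (a : 𝒜) : star (z • a) = star z • star a := by
  have hIa : star (Complex.I • a) = -(Complex.I • star a) := by
    have h1 : Complex.I • a = ((Complex.I : ℂ) • (1:𝒜)) * a := by
      rw [smul_mul_assoc, one_mul]
    rw [h1, star_mul, my_star_I_smul_one, mul_neg, mul_smul_comm, mul_one]
  rw [my_smul_decomp z a, star_add, my_star_real_smul, my_star_real_smul, hIa,
    my_smul_decomp (star z) (star a)]
  simp only [Complex.star_def, Complex.conj_re, Complex.conj_im, neg_smul, smul_neg]

@[reducible]
noncomputable def my_cstar : CStarAlgebra 𝒜 := by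
  letI : StarModule ℂ 𝒜 := ⟨my_star_smul⟩
  exact { ‹NormedRing 𝒜›, ‹StarRing 𝒜›, ‹CStarRing 𝒜›, ‹CompleteSpace 𝒜›,
    ‹NormedAlgebra ℂ 𝒜›, ‹StarModule ℂ 𝒜› with }

lemma my_le_norm_smul_one {a : 𝒜} (ha : 0 ≤ a) : a ≤ ‖a‖ • (1 : 𝒜) := by
  letI := my_cstar (𝒜 := 𝒜)
  have := IsSelfAdjoint.le_algebraMap_norm_self (a := a) (IsSelfAdjoint.of_nonneg ha)
  rwa [Algebra.algebraMap_eq_smul_one] at this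

lemma my_norm_mono {a b : 𝒜} (ha : 0 ≤ a) (hab : a ≤ b) : ‖a‖ ≤ ‖b‖ := by
  letI := my_cstar (𝒜 := 𝒜)
  exact CStarAlgebra.norm_le_norm_of_nonneg_of_le ha hab
end Aux

section CS
variable {𝒜 H : Type*} [NormedRing 𝒜] [StarRing 𝒜] [CStarRing 𝒜] [NormedAlgebra ℂ 𝒜]
  [CompleteSpace 𝒜] [PartialOrder 𝒜] [StarOrderedRing 𝒜]
  [NormedAddCommGroup H] [Module 𝒜 H]

lemma my_cauchy_schwarz
    (inn : H → H → 𝒜)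
    (inn_add_left : ∀ x y z : H, inn (x + y) z = inn x z + inn y z)
    (inn_smul_left : ∀ (a : 𝒜) (x z : H), inn (a • x) z = a * inn x z)
    (inn_conj_symm : ∀ x y : H, inn x y = star (inn y x))
    (inn_nonneg : ∀ x : H, 0 ≤ inn x x)
    (inn_definite : ∀ x : H, inn x x = 0 → x = 0)
    (hnorm : ∀ x : H, ‖x‖ = Real.sqrt ‖inn x x‖)
    (x y : H) : ‖inn x y‖ ≤ ‖x‖ * ‖y‖ := by
  have inn_zero_left : ∀ z : H, inn 0 z = 0 := by
    intro z
    have h := inn_add_left 0 0 z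
    rw [add_zero] at h
    have h2 : inn 0 z + 0 = inn 0 z + inn 0 z := by rw [add_zero]; exact h
    exact (add_left_cancel h2).symm
  have inn_sub_left : ∀ p q r : H, inn (p - q) r = inn p r - inn q r := by
    intro p q r
    have h := inn_add_left (p - q) q r
    rw [sub_add_cancel] at h
    rw [eq_sub_iff_add_eq, ← h]
  have inn_sub_right : ∀ p q r : H, inn p (q - r) = inn p q - inn p r := by
    intro p q r
    rw [inn_conj_symm, inn_sub_left, star_sub, ← inn_conj_symm, ← inn_conj_symm]
  have inn_smul_right : ∀ (a : 𝒜) (p q : H), inn p (a • q) = inn p q * star a := by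
    intro a p q
    calc inn p (a • q) = star (inn (a • q) p) := inn_conj_symm _ _
      _ = star (a * inn q p) := by rw [inn_smul_left]
      _ = star (inn q p) * star a := star_mul _ _
      _ = inn p q * star a := by rw [inn_conj_symm p q]
  by_cases hy0 : inn y y = 0
  · have hy : y = 0 := inn_definite y hy0
    rw [hy, inn_conj_symm, inn_zero_left, star_zero, norm_zero]
    positivity
  · set N := ‖inn y y‖ with hN
    have hNpos : 0 < N := norm_pos_iff.mpr hy0
    set c := inn x y with hc
    set b : 𝒜 := N⁻¹ • c with hb
    have hyx : inn y x = star c := by rw [inn_conj_symm y x]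
    have hstarb : star b = N⁻¹ • star c := by rw [hb, my_star_real_smul]
    have h1 : inn x (b • y) = N⁻¹ • (c * star c) := by
      rw [inn_smul_right, hstarb, mul_smul_comm, ← hc]
    have h2 : inn (b • y) x = N⁻¹ • (c * star c) := by
      rw [inn_smul_left, hyx, hb, smul_mul_assoc]
    have h3 : inn (b • y) (b • y) = (N⁻¹ * N⁻¹) • (c * inn y y * star c) := by
      rw [inn_smul_left, inn_smul_right, hstarb, hb]
      rw [mul_smul_comm, smul_mul_assoc, mul_smul_comm, smul_smul, mul_assoc]
    have hyyN : inn y y ≤ N • (1 : 𝒜) := my_le_norm_smul_one (inn_nonneg y)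
    have hconj : c * inn y y * star c ≤ N • (c * star c) := by
      have h := star_right_conjugate_le_conjugate hyyN c
      rwa [mul_smul_comm, mul_one, smul_mul_assoc] at h
    have h3' : inn (b • y) (b • y) ≤ N⁻¹ • (c * star c) := by
      rw [h3]
      calc (N⁻¹ * N⁻¹) • (c * inn y y * star c) ≤ (N⁻¹ * N⁻¹) • (N • (c * star c)) :=
            my_real_smul_le (by positivity) hconj
        _ = N⁻¹ • (c * star c) := by
            rw [smul_smul]
            congr 1
            field_simp
    have hP := inn_nonneg (x - b • y)
    rw [inn_sub_left, inn_sub_right, inn_sub_right, h1, h2] at hP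
    have key : N⁻¹ • (c * star c) ≤ inn x x := by
      have h5 : inn x x - N⁻¹ • (c * star c) - (N⁻¹ • (c * star c) - inn (b • y) (b • y))
          ≤ inn x x - N⁻¹ • (c * star c) := by
        calc inn x x - N⁻¹ • (c * star c) - (N⁻¹ • (c * star c) - inn (b • y) (b • y))
            = inn x x - N⁻¹ • (c * star c) - N⁻¹ • (c * star c) + inn (b • y) (b • y) := by abel
          _ ≤ inn x x - N⁻¹ • (c * star c) - N⁻¹ • (c * star c) + N⁻¹ • (c * star c) :=
              add_le_add_right h3' _
          _ = inn x x - N⁻¹ • (c * star c) := by abel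
      exact sub_nonneg.mp (le_trans hP h5)
    have key2 : c * star c ≤ N • inn x x := by
      have h := my_real_smul_le (le_of_lt hNpos) key
      rwa [smul_smul, mul_inv_cancel₀ (ne_of_gt hNpos), one_smul] at h
    have hnormle : ‖c * star c‖ ≤ N * ‖inn x x‖ := by
      calc ‖c * star c‖ ≤ ‖N • inn x x‖ := my_norm_mono (mul_star_self_nonneg c) key2
        _ = N * ‖inn x x‖ := by rw [norm_smul, Real.norm_of_nonneg (le_of_lt hNpos)]
    have hcc : ‖c * star c‖ = ‖c‖ * ‖c‖ := CStarRing.norm_self_mul_star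
    have hx2 : ‖x‖ * ‖x‖ = ‖inn x x‖ := by
      rw [hnorm x]; exact Real.mul_self_sqrt (norm_nonneg _)
    have hy2 : ‖y‖ * ‖y‖ = N := by
      rw [hnorm y]; exact Real.mul_self_sqrt (norm_nonneg _)
    nlinarith [norm_nonneg c, norm_nonneg x, norm_nonneg y, hnormle, hcc, hx2, hy2,
      mul_nonneg (norm_nonneg x) (norm_nonneg y)]
end CS



open MeasureTheory

/-- If `(X, Y)` is a continuous biframe for a Hilbert C*-module `H`
over a unital C*-algebra `𝒜`, then the continuous biframe operator `S_{X,Y}` is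
adjointable with adjoint `S_{Y,X}`: `⟨S_{X,Y} f, g⟩ = ⟨f, S_{Y,X} g⟩` for all `f, g`. -/
theorem continuous_biframe_operator_adjoint
    {𝒜 H Ω : Type*}
    -- `𝒜` is a unital C*-algebra
    [NormedRing 𝒜] [StarRing 𝒜] [CStarRing 𝒜] [NormedAlgebra ℂ 𝒜] [CompleteSpace 𝒜]
    [PartialOrder 𝒜] [StarOrderedRing 𝒜]
    -- `H` is a Hilbert C*-module over `𝒜`
    [NormedAddCommGroup H] [NormedSpace ℝ H] [CompleteSpace H] [Module 𝒜 H]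
    (inn : H → H → 𝒜)
    (inn_add_left : ∀ x y z : H, inn (x + y) z = inn x z + inn y z)
    (inn_smul_left : ∀ (a : 𝒜) (x z : H), inn (a • x) z = a * inn x z)
    (inn_conj_symm : ∀ x y : H, inn x y = star (inn y x))
    (inn_nonneg : ∀ x : H, 0 ≤ inn x x)
    (inn_definite : ∀ x : H, inn x x = 0 → x = 0)
    (hnorm : ∀ x : H, ‖x‖ = Real.sqrt ‖inn x x‖)
    -- `(Ω, μ)` is a measure space
    [MeasurableSpace Ω] (μ : Measure Ω)
    -- `X, Y : Ω → H` are weakly measurable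
    (X Y : Ω → H)
    (hXw : ∀ f : H, AEStronglyMeasurable (fun ω => inn f (X ω)) μ)
    (hYw : ∀ f : H, AEStronglyMeasurable (fun ω => inn f (Y ω)) μ)
    -- `(X, Y)` is a continuous biframe with bounds `0 < A ≤ B`
    (A B : ℝ) (hA : 0 < A) (hAB : A ≤ B)
    (hframe : ∀ f : H,
      A • inn f f ≤ ∫ ω, inn f (X ω) * inn (Y ω) f ∂μ ∧
      ∫ ω, inn f (X ω) * inn (Y ω) f ∂μ ≤ B • inn f f)
    -- all relevant integrands are Bochner integrable
    (hXYint : ∀ f : H, Integrable (fun ω => inn f (X ω) • Y ω) μ)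
    (hYXint : ∀ f : H, Integrable (fun ω => inn f (Y ω) • X ω) μ)
    (hprod : ∀ f g : H, Integrable (fun ω => inn f (X ω) * inn (Y ω) g) μ)
    -- the continuous biframe operators `S_{X,Y}` and `S_{Y,X}`
    (SXY SYX : H → H)
    (hSXY : ∀ f : H, SXY f = ∫ ω, inn f (X ω) • Y ω ∂μ)
    (hSYX : ∀ f : H, SYX f = ∫ ω, inn f (Y ω) • X ω ∂μ) :
    ∀ f g : H, inn (SXY f) g = inn f (SYX g) := by
  intro f g
  have cs := my_cauchy_schwarz inn inn_add_left inn_smul_left inn_conj_symm inn_nonneg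
    inn_definite hnorm
  have inn_sub_left : ∀ p q r : H, inn (p - q) r = inn p r - inn q r := by
    intro p q r
    have h := inn_add_left (p - q) q r
    rw [sub_add_cancel] at h
    rw [eq_sub_iff_add_eq, ← h]
  -- build the continuous ℝ-linear map `x ↦ inn x g`
  have mkL : ∀ g : H, ∃ L : H →L[ℝ] 𝒜, ∀ x, L x = inn x g := by
    intro g
    let Φ : H →+ 𝒜 := AddMonoidHom.mk' (fun x => inn x g) (fun a b => inn_add_left a b g)
    have hΦ : ∀ x, Φ x = inn x g := fun x => rfl
    have hlip : LipschitzWith (Real.toNNReal ‖g‖) Φ := by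
      apply LipschitzWith.of_dist_le_mul
      intro p q
      rw [dist_eq_norm, dist_eq_norm, hΦ, hΦ, ← inn_sub_left]
      calc ‖inn (p - q) g‖ ≤ ‖p - q‖ * ‖g‖ := cs _ _
        _ = ↑(Real.toNNReal ‖g‖) * ‖p - q‖ := by
            rw [Real.coe_toNNReal _ (norm_nonneg g), mul_comm]
    exact ⟨Φ.toRealLinearMap hlip.continuous, fun x => rfl⟩
  obtain ⟨Lg, hLg⟩ := mkL g
  obtain ⟨Lf, hLf⟩ := mkL f
  have hL : inn (SXY f) g = ∫ ω, inn f (X ω) * inn (Y ω) g ∂μ := by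
    rw [hSXY, ← hLg, ← ContinuousLinearMap.integral_comp_comm Lg (hXYint f)]
    congr 1
    funext ω
    rw [hLg, inn_smul_left]
  have hR : inn (SYX g) f = ∫ ω, inn g (Y ω) * inn (X ω) f ∂μ := by
    rw [hSYX, ← hLf, ← ContinuousLinearMap.integral_comp_comm Lf (hYXint g)]
    congr 1
    funext ω
    rw [hLf, inn_smul_left]
  rw [hL, inn_conj_symm f (SYX g), hR]
  have hint : Integrable (fun ω => inn g (Y ω) * inn (X ω) f) μ := by
    have heq : (fun ω => inn g (Y ω) * inn (X ω) f)
        = fun ω => star (inn f (X ω) * inn (Y ω) g) := by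
      funext ω
      rw [star_mul, ← inn_conj_symm, ← inn_conj_symm]
    rw [heq]
    refine ⟨continuous_star.comp_aestronglyMeasurable (hprod f g).1, (hprod f g).2.mono ?_⟩
    filter_upwards with ω
    rw [norm_star]
  have hstareq : ∀ a : 𝒜, myStarL (𝒜 := 𝒜) a = star a := fun a => rfl
  have hswap := ContinuousLinearMap.integral_comp_comm (myStarL (𝒜 := 𝒜)) hint
  simp only [hstareq] at hswap
  rw [← hswap]
  congr 1
  funext ω
  rw [star_mul, ← inn_conj_symm, ← inn_conj_symm]
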